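/- arXiv:2402.14931 — 4 statements merged into one kernel-verified Lean document; each statement's English description precedes it below -/
import Mathlib

section
/- A lattice L is not distributive if and only if there exists an injective lattice homomorphism from the pentagon N5 into L or an injective lattice homomorphism from the diamond M3 into L. -/
/-- The pentagon lattice `N₅`. -/
inductive N5 : Type
  | bot | v | u | w | top
  deriving DecidableEq

instance : Fintype N5 := ⟨{.bot, .v, .u, .w, .top}, by intro x; cases x <;> simp⟩

namespace N5

def ble : N5 → N5 → Bool
  | .bot, _ => true
  | _, .top => true
  | .v, .v => true
  | .v, .u => true
  | .u, .u => true
  | .w, .w => true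
  | _, _ => false

instance : Max N5 := ⟨fun a b => if a.ble b then b else if b.ble a then a else .top⟩
instance : Min N5 := ⟨fun a b => if a.ble b then a else if b.ble a then b else .bot⟩

instance : Lattice N5 :=
  Lattice.mk' (by decide) (by decide) (by decide) (by decide) (by decide) (by decide)

end N5

/-- The diamond lattice `M₃`: atoms `a`, `b`, `c` pairwise incomparable with
pairwise meets `0` and pairwise joins `1`. -/
inductive M3 : Type
  | bot | a | b | c | top
  deriving DecidableEq

instance : Fintype M3 := ⟨{.bot, .a, .b, .c, .top}, by intro x; cases x <;> simp⟩

namespace M3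

def ble : M3 → M3 → Bool
  | .bot, _ => true
  | _, .top => true
  | .a, .a => true
  | .b, .b => true
  | .c, .c => true
  | _, _ => false

instance : Max M3 := ⟨fun x y => if x.ble y then y else if y.ble x then x else .top⟩
instance : Min M3 := ⟨fun x y => if x.ble y then x else if y.ble x then y else .bot⟩

instance : Lattice M3 :=
  Lattice.mk' (by decide) (by decide) (by decide) (by decide) (by decide) (by decide)

end M3
example : (N5.v ⊔ N5.w) = N5.top := rfl
example : (N5.u ⊓ (N5.v ⊔ N5.w)) = N5.u := rfl

section
variable {L : Type*} [Lattice L]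

def pentagonHom (p0 pv pu pw p1 : L)
    (h0v : p0 ≤ pv) (hvu : pv ≤ pu) (hu1 : pu ≤ p1) (h0w : p0 ≤ pw) (hw1 : pw ≤ p1)
    (hvw : pv ⊓ pw = p0) (huw : pu ⊓ pw = p0) (hvw' : pv ⊔ pw = p1) (huw' : pu ⊔ pw = p1) :
    LatticeHom N5 L where
  toFun := fun n => match n with
    | .bot => p0 | .v => pv | .u => pu | .w => pw | .top => p1
  map_sup' := by
    have h0u : p0 ≤ pu := h0v.trans hvu
    have hv1 : pv ≤ p1 := hvu.trans hu1
    have h01 : p0 ≤ p1 := h0v.trans hv1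
    have hwv' : pw ⊔ pv = p1 := by rw [sup_comm]; exact hvw'
    have hwu' : pw ⊔ pu = p1 := by rw [sup_comm]; exact huw'
    intro p q
    cases p <;> cases q <;>
      first
      | exact (sup_idem _).symm
      | exact (sup_eq_right.2 (by assumption)).symm
      | exact (sup_eq_left.2 (by assumption)).symm
      | (symm; assumption)
  map_inf' := by
    have h0u : p0 ≤ pu := h0v.trans hvu
    have hv1 : pv ≤ p1 := hvu.trans hu1
    have h01 : p0 ≤ p1 := h0v.trans hv1
    have hwv : pw ⊓ pv = p0 := by rw [inf_comm]; exact hvw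
    have hwu : pw ⊓ pu = p0 := by rw [inf_comm]; exact huw
    intro p q
    cases p <;> cases q <;>
      first
      | exact (inf_idem _).symm
      | exact (inf_eq_left.2 (by assumption)).symm
      | exact (inf_eq_right.2 (by assumption)).symm
      | (symm; assumption)
end
section
variable {L : Type*} [Lattice L]

def diamondHom (d pa pb pc e : L)
    (hda : d ≤ pa) (hdb : d ≤ pb) (hdc : d ≤ pc)
    (hae : pa ≤ e) (hbe : pb ≤ e) (hce : pc ≤ e)
    (hab : pa ⊓ pb = d) (hbc : pb ⊓ pc = d) (hca : pc ⊓ pa = d)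
    (hab' : pa ⊔ pb = e) (hbc' : pb ⊔ pc = e) (hca' : pc ⊔ pa = e) :
    LatticeHom M3 L where
  toFun := fun n => match n with
    | .bot => d | .a => pa | .b => pb | .c => pc | .top => e
  map_sup' := by
    have hde : d ≤ e := hda.trans hae
    have hba' : pb ⊔ pa = e := by rw [sup_comm]; exact hab'
    have hcb' : pc ⊔ pb = e := by rw [sup_comm]; exact hbc'
    have hac' : pa ⊔ pc = e := by rw [sup_comm]; exact hca'
    intro p q
    cases p <;> cases q <;>
      first
      | exact (sup_idem _).symm
      | exact (sup_eq_right.2 (by assumption)).symm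
      | exact (sup_eq_left.2 (by assumption)).symm
      | (symm; assumption)
  map_inf' := by
    have hde : d ≤ e := hda.trans hae
    have hba : pb ⊓ pa = d := by rw [inf_comm]; exact hab
    have hcb : pc ⊓ pb = d := by rw [inf_comm]; exact hbc
    have hac : pa ⊓ pc = d := by rw [inf_comm]; exact hca
    intro p q
    cases p <;> cases q <;>
      first
      | exact (inf_idem _).symm
      | exact (inf_eq_left.2 (by assumption)).symm
      | exact (inf_eq_right.2 (by assumption)).symm
      | (symm; assumption)

theorem diamondHom_inj (d pa pb pc e : L)
    (hda : d ≤ pa) (hdb : d ≤ pb) (hdc : d ≤ pc)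
    (hae : pa ≤ e) (hbe : pb ≤ e) (hce : pc ≤ e)
    (hab : pa ⊓ pb = d) (hbc : pb ⊓ pc = d) (hca : pc ⊓ pa = d)
    (hab' : pa ⊔ pb = e) (hbc' : pb ⊔ pc = e) (hca' : pc ⊔ pa = e)
    (hne : d ≠ e) :
    Function.Injective (diamondHom d pa pb pc e hda hdb hdc hae hbe hce hab hbc hca hab' hbc' hca') := by
  -- distinctness facts
  have hDA : d ≠ pa := by
    rintro rfl
    apply hne
    have hb : pb = e := by rw [← hab', sup_eq_right.2 hdb]
    have hc : pc = e := by rw [← hca', sup_eq_left.2 hdc]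
    rw [← hbc, hb, hc, inf_idem]
  have hDB : d ≠ pb := by
    rintro rfl
    apply hne
    have hc : pc = e := by rw [← hbc', sup_eq_right.2 hdc]
    have ha : pa = e := by rw [← hab', sup_eq_left.2 hda]
    rw [← hca, hc, ha, inf_idem]
  have hDC : d ≠ pc := by
    rintro rfl
    apply hne
    have ha : pa = e := by rw [← hca', sup_eq_right.2 hda]
    have hb : pb = e := by rw [← hbc', sup_eq_left.2 hdb]
    rw [← hab, ha, hb, inf_idem]
  have hAE : pa ≠ e := by
    intro h
    apply hDB
    rw [← hab, h, inf_eq_right.2 hbe]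
  have hBE : pb ≠ e := by
    intro h
    apply hDC
    rw [← hbc, h, inf_eq_right.2 hce]
  have hCE : pc ≠ e := by
    intro h
    apply hDA
    rw [← hca, h, inf_eq_right.2 hae]
  have hAB : pa ≠ pb := by
    intro h
    apply hne
    rw [← hab, ← hab', h, inf_idem, sup_idem]
  have hBC : pb ≠ pc := by
    intro h
    apply hne
    rw [← hbc, ← hbc', h, inf_idem, sup_idem]
  have hCA : pc ≠ pa := by
    intro h
    apply hne
    rw [← hca, ← hca', h, inf_idem, sup_idem]
  intro p q h
  cases p <;> cases q <;> first
    | rfl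
    | (exfalso; first
        | exact hne h | exact hne h.symm
        | exact hDA h | exact hDA h.symm
        | exact hDB h | exact hDB h.symm
        | exact hDC h | exact hDC h.symm
        | exact hAE h | exact hAE h.symm
        | exact hBE h | exact hBE h.symm
        | exact hCE h | exact hCE h.symm
        | exact hAB h | exact hAB h.symm
        | exact hBC h | exact hBC h.symm
        | exact hCA h | exact hCA h.symm)
end
section
variable {L : Type*} [Lattice L]

theorem pentagonHom_inj (p0 pv pu pw p1 : L)
    (h0v : p0 ≤ pv) (hvu : pv ≤ pu) (hu1 : pu ≤ p1) (h0w : p0 ≤ pw) (hw1 : pw ≤ p1)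
    (hvw : pv ⊓ pw = p0) (huw : pu ⊓ pw = p0) (hvw' : pv ⊔ pw = p1) (huw' : pu ⊔ pw = p1)
    (hne : pv ≠ pu) :
    Function.Injective (pentagonHom p0 pv pu pw p1 h0v hvu hu1 h0w hw1 hvw huw hvw' huw') := by
  have h0v' : p0 ≠ pv := by
    intro h
    apply hne
    have hw : pw = p1 := by rw [← hvw', ← h, sup_eq_right.2 h0w]
    calc pv = p0 := h.symm
      _ = pu ⊓ pw := huw.symm
      _ = pu := inf_eq_left.2 (le_of_le_of_eq hu1 hw.symm)
  have h0u' : p0 ≠ pu := by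
    intro h
    apply hne
    have hw : pw = p1 := by rw [← huw', ← h, sup_eq_right.2 h0w]
    calc pv = pv ⊓ pw := (inf_eq_left.2 (le_of_le_of_eq (hvu.trans hu1) hw.symm)).symm
      _ = p0 := hvw
      _ = pu := h
  have h0w' : p0 ≠ pw := by
    intro h
    apply hne
    have hv : pv = p1 := by rw [← hvw', ← h, sup_eq_left.2 h0v]
    exact le_antisymm hvu (le_of_le_of_eq hu1 hv.symm)
  have h01' : p0 ≠ p1 := by
    intro h
    exact hne (le_antisymm hvu ((le_of_le_of_eq hu1 h.symm).trans h0v))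
  have hvw'' : pv ≠ pw := by
    intro h
    apply h0v'
    rw [← hvw, h, inf_idem]
  have hv1' : pv ≠ p1 := by
    intro h
    exact hne (le_antisymm hvu (le_of_le_of_eq hu1 h.symm))
  have huw'' : pu ≠ pw := by
    intro h
    apply h0u'
    rw [← huw, h, inf_idem]
  have hu1' : pu ≠ p1 := by
    intro h
    apply h0w'
    rw [← huw, inf_eq_right.2 (le_of_le_of_eq hw1 h.symm)]
  have hw1' : pw ≠ p1 := by
    intro h
    apply h0v'
    rw [← hvw, inf_eq_left.2 (le_of_le_of_eq (hvu.trans hu1) h.symm)]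
  intro p q h
  cases p <;> cases q <;> first
    | rfl
    | (exfalso; first
        | exact h0v' h | exact h0v' h.symm
        | exact h0u' h | exact h0u' h.symm
        | exact h0w' h | exact h0w' h.symm
        | exact h01' h | exact h01' h.symm
        | exact hne h | exact hne h.symm
        | exact hvw'' h | exact hvw'' h.symm
        | exact hv1' h | exact hv1' h.symm
        | exact huw'' h | exact huw'' h.symm
        | exact hu1' h | exact hu1' h.symm
        | exact hw1' h | exact hw1' h.symm)

variable (hm : ∀ a b c : L, a ≤ c → a ⊔ b ⊓ c = (a ⊔ b) ⊓ c)

include hm in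
theorem keyInf (x y z : L) :
    (x ⊔ y ⊓ z) ⊓ (y ⊔ z ⊓ x) = x ⊓ y ⊔ (y ⊓ z ⊔ z ⊓ x) := by
  have h1 : y ⊓ z ⊔ x ⊓ y = (y ⊓ z ⊔ x) ⊓ y := hm (y ⊓ z) x y inf_le_left
  have h2 : z ⊓ x ⊔ y ⊓ (x ⊔ y ⊓ z) = (z ⊓ x ⊔ y) ⊓ (x ⊔ y ⊓ z) :=
    hm (z ⊓ x) y (x ⊔ y ⊓ z) (inf_le_right.trans le_sup_left)
  have h3 : y ⊓ (x ⊔ y ⊓ z) = y ⊓ z ⊔ x ⊓ y := by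
    rw [h1, inf_comm]
    congr 1
    ac_rfl
  calc (x ⊔ y ⊓ z) ⊓ (y ⊔ z ⊓ x) = (z ⊓ x ⊔ y) ⊓ (x ⊔ y ⊓ z) := by rw [inf_comm, sup_comm]
    _ = z ⊓ x ⊔ y ⊓ (x ⊔ y ⊓ z) := h2.symm
    _ = z ⊓ x ⊔ (y ⊓ z ⊔ x ⊓ y) := by rw [h3]
    _ = x ⊓ y ⊔ (y ⊓ z ⊔ z ⊓ x) := by ac_rfl

include hm in
theorem keySup (x y z : L) :
    x ⊓ (y ⊔ z) ⊔ y ⊓ (z ⊔ x) = (x ⊔ y) ⊓ ((y ⊔ z) ⊓ (z ⊔ x)) := by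
  have h1 : y ⊔ x ⊓ (y ⊔ z) = (y ⊔ x) ⊓ (y ⊔ z) := hm y x (y ⊔ z) le_sup_left
  have h2 : x ⊓ (y ⊔ z) ⊔ y ⊓ (z ⊔ x) = (x ⊓ (y ⊔ z) ⊔ y) ⊓ (z ⊔ x) :=
    hm (x ⊓ (y ⊔ z)) y (z ⊔ x) (inf_le_left.trans le_sup_right)
  calc x ⊓ (y ⊔ z) ⊔ y ⊓ (z ⊔ x) = (x ⊓ (y ⊔ z) ⊔ y) ⊓ (z ⊔ x) := h2
    _ = ((y ⊔ x) ⊓ (y ⊔ z)) ⊓ (z ⊔ x) := by rw [sup_comm (x ⊓ (y ⊔ z)) y, h1]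
    _ = (x ⊔ y) ⊓ ((y ⊔ z) ⊓ (z ⊔ x)) := by ac_rfl

theorem infE (x y z : L) : x ⊓ ((x ⊔ y) ⊓ ((y ⊔ z) ⊓ (z ⊔ x))) = x ⊓ (y ⊔ z) := by
  apply le_antisymm
  · exact le_inf inf_le_left (inf_le_right.trans (inf_le_right.trans inf_le_left))
  · exact le_inf inf_le_left (le_inf (inf_le_left.trans le_sup_left)
      (le_inf inf_le_right (inf_le_left.trans le_sup_right)))

theorem supD (x y z : L) : x ⊔ (x ⊓ y ⊔ (y ⊓ z ⊔ z ⊓ x)) = x ⊔ y ⊓ z := by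
  apply le_antisymm
  · exact sup_le le_sup_left (sup_le (inf_le_left.trans le_sup_left)
      (sup_le le_sup_right (inf_le_right.trans le_sup_left)))
  · exact sup_le le_sup_left (le_sup_left.trans (le_sup_right.trans le_sup_right))

include hm in
theorem infD (x y z : L) : x ⊓ (x ⊓ y ⊔ (y ⊓ z ⊔ z ⊓ x)) = x ⊓ y ⊔ x ⊓ z := by
  have h := hm (x ⊓ y ⊔ z ⊓ x) (y ⊓ z) x (sup_le inf_le_left inf_le_right)
  have h2 : (x ⊓ y ⊔ z ⊓ x) ⊔ y ⊓ z ⊓ x = x ⊓ y ⊔ z ⊓ x :=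
    sup_eq_left.2 ((le_inf (inf_le_left.trans inf_le_right) inf_le_right).trans le_sup_right)
  calc x ⊓ (x ⊓ y ⊔ (y ⊓ z ⊔ z ⊓ x)) = ((x ⊓ y ⊔ z ⊓ x) ⊔ y ⊓ z) ⊓ x := by
        rw [inf_comm]; congr 1; ac_rfl
    _ = (x ⊓ y ⊔ z ⊓ x) ⊔ y ⊓ z ⊓ x := h.symm
    _ = x ⊓ y ⊔ z ⊓ x := h2
    _ = x ⊓ y ⊔ x ⊓ z := by rw [inf_comm z x]
end
theorem not_distributive_iff_pentagon_or_diamond {L : Type*} [Lattice L] :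
    ¬ (∀ x y z : L, x ⊓ (y ⊔ z) = (x ⊓ y) ⊔ (x ⊓ z)) ↔
      (∃ f : LatticeHom N5 L, Function.Injective f) ∨
      (∃ f : LatticeHom M3 L, Function.Injective f) := by
  constructor
  · intro hnd
    push_neg at hnd
    obtain ⟨x, y, z, hxyz⟩ := hnd
    by_cases hm : ∀ a b c : L, a ≤ c → a ⊔ b ⊓ c = (a ⊔ b) ⊓ c
    · right
      set D := x ⊓ y ⊔ (y ⊓ z ⊔ z ⊓ x) with hD
      set E := (x ⊔ y) ⊓ ((y ⊔ z) ⊓ (z ⊔ x)) with hE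
      have hDE : D ≤ E := by
        rw [hD, hE]
        refine sup_le (le_inf ?_ (le_inf ?_ ?_)) (sup_le (le_inf ?_ (le_inf ?_ ?_))
          (le_inf ?_ (le_inf ?_ ?_))) <;>
          first
            | exact inf_le_left.trans le_sup_left
            | exact inf_le_left.trans le_sup_right
            | exact inf_le_right.trans le_sup_left
      have h1 : x ⊓ E = x ⊓ (y ⊔ z) := by rw [hE]; exact infE x y z
      have h2 : y ⊓ E = y ⊓ (z ⊔ x) := by
        rw [hE, show (x ⊔ y) ⊓ ((y ⊔ z) ⊓ (z ⊔ x)) = (y ⊔ z) ⊓ ((z ⊔ x) ⊓ (x ⊔ y)) from by ac_rfl]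
        exact infE y z x
      have h3 : z ⊓ E = z ⊓ (x ⊔ y) := by
        rw [hE, show (x ⊔ y) ⊓ ((y ⊔ z) ⊓ (z ⊔ x)) = (z ⊔ x) ⊓ ((x ⊔ y) ⊓ (y ⊔ z)) from by ac_rfl]
        exact infE z x y
      have hpa : x ⊓ E ⊔ D = (x ⊔ y ⊓ z) ⊓ E := by
        calc x ⊓ E ⊔ D = D ⊔ x ⊓ E := sup_comm _ _
          _ = (D ⊔ x) ⊓ E := hm D x E hDE
          _ = (x ⊔ D) ⊓ E := by rw [sup_comm D x]
          _ = (x ⊔ y ⊓ z) ⊓ E := by rw [hD, supD]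
      have hpb : y ⊓ E ⊔ D = (y ⊔ z ⊓ x) ⊓ E := by
        calc y ⊓ E ⊔ D = D ⊔ y ⊓ E := sup_comm _ _
          _ = (D ⊔ y) ⊓ E := hm D y E hDE
          _ = (y ⊔ D) ⊓ E := by rw [sup_comm D y]
          _ = (y ⊔ z ⊓ x) ⊓ E := by
              rw [hD, show x ⊓ y ⊔ (y ⊓ z ⊔ z ⊓ x) = y ⊓ z ⊔ (z ⊓ x ⊔ x ⊓ y) from by ac_rfl,
                supD]
      have hpc : z ⊓ E ⊔ D = (z ⊔ x ⊓ y) ⊓ E := by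
        calc z ⊓ E ⊔ D = D ⊔ z ⊓ E := sup_comm _ _
          _ = (D ⊔ z) ⊓ E := hm D z E hDE
          _ = (z ⊔ D) ⊓ E := by rw [sup_comm D z]
          _ = (z ⊔ x ⊓ y) ⊓ E := by
              rw [hD, show x ⊓ y ⊔ (y ⊓ z ⊔ z ⊓ x) = z ⊓ x ⊔ (x ⊓ y ⊔ y ⊓ z) from by ac_rfl,
                supD]
      have hab : (x ⊓ E ⊔ D) ⊓ (y ⊓ E ⊔ D) = D := by
        rw [hpa, hpb,
          show (x ⊔ y ⊓ z) ⊓ E ⊓ ((y ⊔ z ⊓ x) ⊓ E) = (x ⊔ y ⊓ z) ⊓ (y ⊔ z ⊓ x) ⊓ E from by ac_rfl,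
          keyInf hm x y z, ← hD]
        exact inf_eq_left.2 hDE
      have hbc : (y ⊓ E ⊔ D) ⊓ (z ⊓ E ⊔ D) = D := by
        rw [hpb, hpc,
          show (y ⊔ z ⊓ x) ⊓ E ⊓ ((z ⊔ x ⊓ y) ⊓ E) = (y ⊔ z ⊓ x) ⊓ (z ⊔ x ⊓ y) ⊓ E from by ac_rfl,
          keyInf hm y z x,
          show y ⊓ z ⊔ (z ⊓ x ⊔ x ⊓ y) = D from by rw [hD]; ac_rfl]
        exact inf_eq_left.2 hDE
      have hca : (z ⊓ E ⊔ D) ⊓ (x ⊓ E ⊔ D) = D := by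
        rw [hpc, hpa,
          show (z ⊔ x ⊓ y) ⊓ E ⊓ ((x ⊔ y ⊓ z) ⊓ E) = (z ⊔ x ⊓ y) ⊓ (x ⊔ y ⊓ z) ⊓ E from by ac_rfl,
          keyInf hm z x y,
          show z ⊓ x ⊔ (x ⊓ y ⊔ y ⊓ z) = D from by rw [hD]; ac_rfl]
        exact inf_eq_left.2 hDE
      have hab' : (x ⊓ E ⊔ D) ⊔ (y ⊓ E ⊔ D) = E := by
        rw [show (x ⊓ E ⊔ D) ⊔ (y ⊓ E ⊔ D) = (x ⊓ E ⊔ y ⊓ E) ⊔ D from by ac_rfl, h1, h2,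
          keySup hm x y z, ← hE]
        exact sup_eq_left.2 hDE
      have hbc' : (y ⊓ E ⊔ D) ⊔ (z ⊓ E ⊔ D) = E := by
        rw [show (y ⊓ E ⊔ D) ⊔ (z ⊓ E ⊔ D) = (y ⊓ E ⊔ z ⊓ E) ⊔ D from by ac_rfl, h2, h3,
          keySup hm y z x,
          show (y ⊔ z) ⊓ ((z ⊔ x) ⊓ (x ⊔ y)) = E from by rw [hE]; ac_rfl]
        exact sup_eq_left.2 hDE
      have hca' : (z ⊓ E ⊔ D) ⊔ (x ⊓ E ⊔ D) = E := by
        rw [show (z ⊓ E ⊔ D) ⊔ (x ⊓ E ⊔ D) = (z ⊓ E ⊔ x ⊓ E) ⊔ D from by ac_rfl, h3, h1,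
          keySup hm z x y,
          show (z ⊔ x) ⊓ ((x ⊔ y) ⊓ (y ⊔ z)) = E from by rw [hE]; ac_rfl]
        exact sup_eq_left.2 hDE
      have hne : D ≠ E := by
        intro h
        apply hxyz
        have h2' : x ⊓ D = x ⊓ y ⊔ x ⊓ z := by rw [hD]; exact infD hm x y z
        rw [← h1, ← h, h2']
      exact ⟨_, diamondHom_inj D (x ⊓ E ⊔ D) (y ⊓ E ⊔ D) (z ⊓ E ⊔ D) E
        le_sup_right le_sup_right le_sup_right
        (sup_le inf_le_right hDE) (sup_le inf_le_right hDE) (sup_le inf_le_right hDE)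
        hab hbc hca hab' hbc' hca' hne⟩
    · left
      push_neg at hm
      obtain ⟨a, b, c, hac, hne⟩ := hm
      have hvu : a ⊔ b ⊓ c ≤ (a ⊔ b) ⊓ c :=
        sup_le (le_inf le_sup_left hac) (le_inf (inf_le_left.trans le_sup_right) inf_le_right)
      have hvw : (a ⊔ b ⊓ c) ⊓ b = b ⊓ c := by
        apply le_antisymm
        · exact le_inf inf_le_right
            ((inf_le_inf_right b hvu).trans (inf_le_left.trans inf_le_right))
        · exact le_inf le_sup_right inf_le_left
      have huw : (a ⊔ b) ⊓ c ⊓ b = b ⊓ c := by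
        apply le_antisymm
        · exact le_inf inf_le_right (inf_le_left.trans inf_le_right)
        · exact le_inf (inf_le_inf_right c le_sup_right) inf_le_left
      have hvw' : (a ⊔ b ⊓ c) ⊔ b = a ⊔ b := by
        apply le_antisymm
        · exact sup_le (sup_le le_sup_left (inf_le_left.trans le_sup_right)) le_sup_right
        · exact sup_le (le_sup_left.trans le_sup_left) le_sup_right
      have huw' : (a ⊔ b) ⊓ c ⊔ b = a ⊔ b := by
        apply le_antisymm
        · exact sup_le inf_le_left le_sup_right
        · exact sup_le ((le_sup_left.trans hvu).trans le_sup_left) le_sup_right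
      exact ⟨_, pentagonHom_inj (b ⊓ c) (a ⊔ b ⊓ c) ((a ⊔ b) ⊓ c) b (a ⊔ b)
        le_sup_right hvu inf_le_left inf_le_left le_sup_right
        hvw huw hvw' huw' hne⟩
  · rintro (⟨f, hf⟩ | ⟨f, hf⟩) hd
    · have h := hd (f .u) (f .v) (f .w)
      simp only [← map_inf, ← map_sup] at h
      exact absurd (hf h) (by decide)
    · have h := hd (f .a) (f .b) (f .c)
      simp only [← map_inf, ← map_sup] at h
      exact absurd (hf h) (by decide)
end

section
/- Let L be a modular lattice and d, e, f ∈ L. Define p = (d ⊓ e) ⊔ (e ⊓ f) ⊔ (f ⊓ d), q = (d ⊔ e) ⊓ (e ⊔ f) ⊓ (f ⊔ d), u = (d ⊓ q) ⊔ p, v = (e ⊓ q) ⊔ p. Then u ⊓ v = p. -/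
theorem inf_uv_eq_p {L : Type*} [Lattice L] [IsModularLattice L] (d e f : L) :
    let p := (d ⊓ e) ⊔ (e ⊓ f) ⊔ (f ⊓ d)
    let q := (d ⊔ e) ⊓ (e ⊔ f) ⊓ (f ⊔ d)
    let u := (d ⊓ q) ⊔ p
    let v := (e ⊓ q) ⊔ p
    u ⊓ v = p := by
  intro p q u v
  have hv : v ≤ e ⊔ (f ⊓ d) := by
    apply sup_le (inf_le_left.trans le_sup_left)
    exact sup_le (sup_le (inf_le_right.trans le_sup_left)
      (inf_le_left.trans le_sup_left)) le_sup_right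
  have hvd : v ⊓ d ≤ p := by
    calc v ⊓ d ≤ (e ⊔ (f ⊓ d)) ⊓ d := inf_le_inf_right d hv
    _ = d ⊓ (e ⊔ (f ⊓ d)) := inf_comm _ _
    _ = d ⊓ e ⊔ (f ⊓ d) := (inf_sup_assoc_of_le e inf_le_right).symm
    _ ≤ p := sup_le (le_sup_left.trans le_sup_left) le_sup_right
  have : u ⊓ v = p ⊔ ((d ⊓ q) ⊓ v) := by
    rw [show u = p ⊔ (d ⊓ q) from sup_comm _ _,
      sup_inf_assoc_of_le (d ⊓ q) (le_sup_right : p ≤ v)]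
  rw [this, sup_eq_left]
  exact le_trans (inf_le_inf_right v inf_le_left) (by rw [inf_comm]; exact hvd)
end

section
/- Let L be a modular lattice and d, e, f ∈ L. With p = (d ⊓ e) ⊔ (e ⊓ f) ⊔ (f ⊓ d), q = (d ⊔ e) ⊓ (e ⊔ f) ⊓ (f ⊔ d), u = (d ⊓ q) ⊔ p, v = (e ⊓ q) ⊔ p, we have u ⊔ v = q. -/
theorem sup_uv_eq_q {L : Type*} [Lattice L] [IsModularLattice L] (d e f : L) :
    let p := (d ⊓ e) ⊔ (e ⊓ f) ⊔ (f ⊓ d)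
    let q := (d ⊔ e) ⊓ (e ⊔ f) ⊓ (f ⊔ d)
    let u := (d ⊓ q) ⊔ p
    let v := (e ⊓ q) ⊔ p
    u ⊔ v = q := by
  intro p q u v
  have hdq : d ⊓ q = d ⊓ (e ⊔ f) := by
    apply le_antisymm
    · exact inf_le_inf_left d (le_trans inf_le_left inf_le_right)
    · exact le_inf inf_le_left (le_inf (le_inf (le_trans inf_le_left le_sup_left)
        inf_le_right) (le_trans inf_le_left le_sup_right))
  have heq : e ⊓ q = e ⊓ (f ⊔ d) := by
    apply le_antisymm
    · exact inf_le_inf_left e inf_le_right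
    · exact le_inf inf_le_left (le_inf (le_inf (le_trans inf_le_left le_sup_right)
        (le_trans inf_le_left le_sup_left)) inf_le_right)
  have hq : q = (d ⊓ q) ⊔ (e ⊓ q) := by
    have h1 : (d ⊔ e) ⊓ (e ⊔ f) = (d ⊓ (e ⊔ f)) ⊔ e := by
      rw [sup_comm d e, sup_inf_assoc_of_le _ le_sup_left, sup_comm]
    have h2 : ((d ⊓ (e ⊔ f)) ⊔ e) ⊓ (f ⊔ d) = (d ⊓ (e ⊔ f)) ⊔ (e ⊓ (f ⊔ d)) :=
      sup_inf_assoc_of_le _ (le_trans inf_le_left le_sup_right)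
    rw [hdq, heq]
    show (d ⊔ e) ⊓ (e ⊔ f) ⊓ (f ⊔ d) = _
    rw [h1, h2]
  have hpq : p ≤ q := by
    refine sup_le (sup_le ?_ ?_) ?_ <;>
      refine le_inf (le_inf ?_ ?_) ?_ <;>
      first
        | exact le_trans inf_le_left le_sup_left
        | exact le_trans inf_le_left le_sup_right
        | exact le_trans inf_le_right le_sup_left
        | exact le_trans inf_le_right le_sup_right
  apply le_antisymm
  · exact sup_le (sup_le inf_le_right hpq) (sup_le inf_le_right hpq)
  · calc q = (d ⊓ q) ⊔ (e ⊓ q) := hq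
      _ ≤ u ⊔ v := sup_le_sup le_sup_left le_sup_left
end

section
/- Let L be a modular lattice, d, e, f ∈ L with d ⊓ (e ⊔ f) > (d ⊓ e) ⊔ (d ⊓ f). Define p = (d ⊓ e) ⊔ (e ⊓ f) ⊔ (f ⊓ d), q = (d ⊔ e) ⊓ (e ⊔ f) ⊓ (f ⊔ d), u = (d ⊓ q) ⊔ p, v = (e ⊓ q) ⊔ p, w = (f ⊓ q) ⊔ p. Then the five elements p, q, u, v, w are pairwise distinct. -/
section helpers
variable {L : Type*} [Lattice L] [IsModularLattice L]

private lemma dd_aQ (a b c : L) : a ⊓ ((a ⊔ b) ⊓ (b ⊔ c) ⊓ (c ⊔ a)) = a ⊓ (b ⊔ c) := by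
  apply le_antisymm
  · exact le_inf inf_le_left (inf_le_right.trans (inf_le_left.trans inf_le_right))
  · exact le_inf inf_le_left (le_inf (le_inf (inf_le_left.trans le_sup_left) inf_le_right)
      (inf_le_left.trans le_sup_right))

private lemma dd_supQ (a b c : L) :
    (a ⊓ ((a ⊔ b) ⊓ (b ⊔ c) ⊓ (c ⊔ a))) ⊔ (b ⊓ ((a ⊔ b) ⊓ (b ⊔ c) ⊓ (c ⊔ a)))
      = (a ⊔ b) ⊓ (b ⊔ c) ⊓ (c ⊔ a) := by
  set Q := (a ⊔ b) ⊓ (b ⊔ c) ⊓ (c ⊔ a) with hQ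
  have key : Q ≤ b ⊔ (a ⊓ Q) := by
    have e1 : (b ⊔ c) ⊓ a ⊔ b = (b ⊔ c) ⊓ (a ⊔ b) := inf_sup_assoc_of_le a le_sup_left
    calc Q ≤ (b ⊔ c) ⊓ (a ⊔ b) :=
          le_inf (inf_le_left.trans inf_le_right) (inf_le_left.trans inf_le_left)
      _ = (b ⊔ c) ⊓ a ⊔ b := e1.symm
      _ = a ⊓ Q ⊔ b := by rw [inf_comm, dd_aQ a b c]
      _ = b ⊔ (a ⊓ Q) := sup_comm _ _
  apply le_antisymm (sup_le inf_le_right inf_le_right)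
  calc Q = Q ⊓ (b ⊔ (a ⊓ Q)) := (inf_eq_left.mpr key).symm
    _ = Q ⊓ b ⊔ a ⊓ Q := (inf_sup_assoc_of_le b inf_le_right).symm
    _ ≤ a ⊓ Q ⊔ b ⊓ Q := by rw [inf_comm Q b]; exact le_of_eq (sup_comm _ _)

private lemma dd_aP (a b c : L) : a ⊔ ((a ⊓ b) ⊔ (b ⊓ c) ⊔ (c ⊓ a)) = a ⊔ (b ⊓ c) := by
  apply le_antisymm
  · exact sup_le le_sup_left (sup_le (sup_le (inf_le_left.trans le_sup_left) le_sup_right)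
      (inf_le_right.trans le_sup_left))
  · exact sup_le le_sup_left (le_sup_right.trans (le_sup_left.trans le_sup_right))

private lemma dd_infP (a b c : L) :
    (a ⊔ ((a ⊓ b) ⊔ (b ⊓ c) ⊔ (c ⊓ a))) ⊓ (b ⊔ ((a ⊓ b) ⊔ (b ⊓ c) ⊔ (c ⊓ a)))
      = (a ⊓ b) ⊔ (b ⊓ c) ⊔ (c ⊓ a) := by
  set P := (a ⊓ b) ⊔ (b ⊓ c) ⊔ (c ⊓ a) with hP
  have hbP : b ⊔ P = b ⊔ (c ⊓ a) := by
    have := dd_aP b c a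
    rw [show (b ⊓ c) ⊔ (c ⊓ a) ⊔ (a ⊓ b) = P from by rw [hP]; ac_rfl] at this
    exact this
  have key : a ⊓ (b ⊔ P) ≤ P := by
    rw [hbP, ← inf_sup_assoc_of_le b inf_le_right]
    exact sup_le (le_sup_left.trans le_sup_left) le_sup_right
  apply le_antisymm _ (le_inf le_sup_right le_sup_right)
  calc (a ⊔ P) ⊓ (b ⊔ P) = (P ⊔ a) ⊓ (b ⊔ P) := by rw [sup_comm a P]
    _ = P ⊔ a ⊓ (b ⊔ P) := sup_inf_assoc_of_le a le_sup_right
    _ ≤ P ⊔ P := sup_le_sup_left key P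
    _ = P := sup_idem P

end helpers

theorem diamond_distinct {L : Type*} [Lattice L] [IsModularLattice L] (d e f : L)
    (h : d ⊓ (e ⊔ f) > (d ⊓ e) ⊔ (d ⊓ f)) :
    let p := (d ⊓ e) ⊔ (e ⊓ f) ⊔ (f ⊓ d)
    let q := (d ⊔ e) ⊓ (e ⊔ f) ⊓ (f ⊔ d)
    let u := (d ⊓ q) ⊔ p
    let v := (e ⊓ q) ⊔ p
    let w := (f ⊓ q) ⊔ p
    p ≠ q ∧ p ≠ u ∧ p ≠ v ∧ p ≠ w ∧ q ≠ u ∧ q ≠ v ∧ q ≠ w ∧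
    u ≠ v ∧ u ≠ w ∧ v ≠ w := by
  intro p q u v w
  have hpd : p = (d ⊓ e) ⊔ (e ⊓ f) ⊔ (f ⊓ d) := rfl
  have hqd : q = (d ⊔ e) ⊓ (e ⊔ f) ⊓ (f ⊔ d) := rfl
  have hu : u = (d ⊓ q) ⊔ p := rfl
  have hv : v = (e ⊓ q) ⊔ p := rfl
  have hw : w = (f ⊓ q) ⊔ p := rfl
  have hpq_le : p ≤ q := by
    rw [hpd, hqd]
    refine sup_le (sup_le ?_ ?_) ?_ <;> refine le_inf (le_inf ?_ ?_) ?_ <;>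
      first
        | exact inf_le_left.trans le_sup_left
        | exact inf_le_left.trans le_sup_right
        | exact inf_le_right.trans le_sup_left
        | exact inf_le_right.trans le_sup_right
  -- p ≠ q
  have hdq : d ⊓ q = d ⊓ (e ⊔ f) := by rw [hqd]; exact dd_aQ d e f
  have hdp : d ⊓ p = (d ⊓ e) ⊔ (d ⊓ f) := by
    rw [hpd, ← inf_sup_assoc_of_le _ (inf_le_right : f ⊓ d ≤ d),
      sup_comm (d ⊓ e) (e ⊓ f), ← inf_sup_assoc_of_le _ (inf_le_left : d ⊓ e ≤ d),
      ← inf_assoc, sup_eq_right.mpr (inf_le_left : d ⊓ e ⊓ f ≤ d ⊓ e), inf_comm f d]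
  have h2 : d ⊓ p < d ⊓ q := by rw [hdp, hdq]; exact h
  have hpq : p ≠ q := fun hE => absurd (by rw [hE] : d ⊓ p = d ⊓ q) h2.ne
  -- sup identities
  have hde : (d ⊓ q) ⊔ (e ⊓ q) = q := by rw [hqd]; exact dd_supQ d e f
  have hef : (e ⊓ q) ⊔ (f ⊓ q) = q := by
    have := dd_supQ e f d
    rw [show (e ⊔ f) ⊓ (f ⊔ d) ⊓ (d ⊔ e) = (d ⊔ e) ⊓ (e ⊔ f) ⊓ (f ⊔ d) from by ac_rfl,
      ← hqd] at this
    exact this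
  have hfd : (f ⊓ q) ⊔ (d ⊓ q) = q := by
    have := dd_supQ f d e
    rw [show (f ⊔ d) ⊓ (d ⊔ e) ⊓ (e ⊔ f) = (d ⊔ e) ⊓ (e ⊔ f) ⊓ (f ⊔ d) from by ac_rfl,
      ← hqd] at this
    exact this
  -- inf identities
  have hde' : (d ⊔ p) ⊓ (e ⊔ p) = p := by rw [hpd]; exact dd_infP d e f
  have hef' : (e ⊔ p) ⊓ (f ⊔ p) = p := by
    have := dd_infP e f d
    rw [show (e ⊓ f) ⊔ (f ⊓ d) ⊔ (d ⊓ e) = (d ⊓ e) ⊔ (e ⊓ f) ⊔ (f ⊓ d) from by ac_rfl,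
      ← hpd] at this
    exact this
  have hfd' : (f ⊔ p) ⊓ (d ⊔ p) = p := by
    have := dd_infP f d e
    rw [show (f ⊓ d) ⊔ (d ⊓ e) ⊔ (e ⊓ f) = (d ⊓ e) ⊔ (e ⊓ f) ⊔ (f ⊓ d) from by ac_rfl,
      ← hpd] at this
    exact this
  -- alternative forms of u v w
  have hu' : u = q ⊓ (d ⊔ p) := by rw [hu, inf_comm d q]; exact inf_sup_assoc_of_le d hpq_le
  have hv' : v = q ⊓ (e ⊔ p) := by rw [hv, inf_comm e q]; exact inf_sup_assoc_of_le e hpq_le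
  have hw' : w = q ⊓ (f ⊔ p) := by rw [hw, inf_comm f q]; exact inf_sup_assoc_of_le f hpq_le
  -- pairwise sups and infs
  have huv : u ⊔ v = q := by
    rw [hu, hv, sup_sup_sup_comm, sup_idem, hde]; exact sup_eq_left.mpr hpq_le
  have hvw : v ⊔ w = q := by
    rw [hv, hw, sup_sup_sup_comm, sup_idem, hef]; exact sup_eq_left.mpr hpq_le
  have huw : u ⊔ w = q := by
    rw [hu, hw, sup_sup_sup_comm, sup_idem, sup_comm (d ⊓ q) (f ⊓ q), hfd]
    exact sup_eq_left.mpr hpq_le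
  have huv' : u ⊓ v = p := by
    rw [hu', hv', inf_inf_inf_comm, inf_idem, hde']; exact inf_eq_right.mpr hpq_le
  have hvw' : v ⊓ w = p := by
    rw [hv', hw', inf_inf_inf_comm, inf_idem, hef']; exact inf_eq_right.mpr hpq_le
  have huw' : u ⊓ w = p := by
    rw [hu', hw', inf_inf_inf_comm, inf_idem, inf_comm (d ⊔ p) (f ⊔ p), hfd']
    exact inf_eq_right.mpr hpq_le
  -- bounds
  have hpu : p ≤ u := hu ▸ le_sup_right
  have hpv : p ≤ v := hv ▸ le_sup_right
  have hpw : p ≤ w := hw ▸ le_sup_right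
  have huq : u ≤ q := hu ▸ sup_le inf_le_right hpq_le
  have hvq : v ≤ q := hv ▸ sup_le inf_le_right hpq_le
  have hwq : w ≤ q := hw ▸ sup_le inf_le_right hpq_le
  refine ⟨hpq, ?_, ?_, ?_, ?_, ?_, ?_, ?_, ?_, ?_⟩
  · -- p ≠ u
    intro hE
    have h1 : v = q := by rw [← huv, ← hE, sup_eq_right.mpr hpv]
    have h2 : w = q := by rw [← huw, ← hE, sup_eq_right.mpr hpw]
    exact hpq (by rw [← hvw', h1, h2, inf_idem])
  · intro hE
    have h1 : u = q := by rw [← huv, ← hE, sup_eq_left.mpr hpu]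
    have h2 : w = q := by rw [← hvw, ← hE, sup_eq_right.mpr hpw]
    exact hpq (by rw [← huw', h1, h2, inf_idem])
  · intro hE
    have h1 : u = q := by rw [← huw, ← hE, sup_eq_left.mpr hpu]
    have h2 : v = q := by rw [← hvw, ← hE, sup_eq_left.mpr hpv]
    exact hpq (by rw [← huv', h1, h2, inf_idem])
  · intro hE
    have h1 : v = p := by rw [← huv', ← hE, inf_eq_right.mpr hvq]
    have h2 : w = p := by rw [← huw', ← hE, inf_eq_right.mpr hwq]
    exact hpq (by rw [← hvw, h1, h2, sup_idem])
  · intro hE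
    have h1 : u = p := by rw [← huv', ← hE, inf_eq_left.mpr huq]
    have h2 : w = p := by rw [← hvw', ← hE, inf_eq_right.mpr hwq]
    exact hpq (by rw [← huw, h1, h2, sup_idem])
  · intro hE
    have h1 : u = p := by rw [← huw', ← hE, inf_eq_left.mpr huq]
    have h2 : v = p := by rw [← hvw', ← hE, inf_eq_left.mpr hvq]
    exact hpq (by rw [← huv, h1, h2, sup_idem])
  · intro hE
    refine hpq (huv'.symm.trans ?_)
    rw [← hE, inf_idem, ← huv, ← hE, sup_idem]
  · intro hE
    refine hpq (huw'.symm.trans ?_)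
    rw [← hE, inf_idem, ← huw, ← hE, sup_idem]
  · intro hE
    refine hpq (hvw'.symm.trans ?_)
    rw [← hE, inf_idem, ← hvw, ← hE, sup_idem]
end
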